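/- Let a be a norm-one quaternion. The map φ = T_{a,ā} ∘ σ (i.e., φ(x) = a·x̄·ā where σ is conjugation) satisfies φ(φ(x)·x) = φ(x)·x for all quaternions x if and only if a² = 1 or a² = −1. -/

import Mathlib

theorem stmt_5 (a : Quaternion ℝ) (ha : ‖a‖ = 1) :
    (∀ x : Quaternion ℝ,
        a * star ((a * star x * star a) * x) * star a = (a * star x * star a) * x) ↔
      (a ^ 2 = 1 ∨ a ^ 2 = -1) := by
  have hns : (Quaternion.normSq a : ℝ) = 1 := by
    rw [Quaternion.normSq_eq_norm_mul_self, ha, one_mul]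
  have h1 : a * star a = 1 := by
    rw [Quaternion.self_mul_star, hns]; norm_num
  have h2 : star a * a = 1 := by
    rw [Quaternion.star_mul_self, hns]; norm_num
  have ha0 : a ≠ 0 := by
    intro h; rw [h] at ha; simp at ha
  have hstar : ∀ x : Quaternion ℝ,
      star ((a * star x * star a) * x) = star x * (a * (x * star a)) := by
    intro x; simp [star_mul, star_star, mul_assoc]
  constructor
  · intro H
    have comm : ∀ x : Quaternion ℝ, x * (star a * star a) = (star a * star a) * x := by
      intro x
      rcases eq_or_ne x 0 with rfl | hx
      · simp
      have k := H x
      rw [hstar x] at k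
      have e1 : a * (star x * (a * (x * (star a * star a)))) = a * (star x * (star a * x)) := by
        rw [show a * (star x * (a * (x * (star a * star a)))) =
            a * (star x * (a * (x * star a))) * star a by noncomm_ring, k]
        noncomm_ring
      have k2 : star x * (a * (x * (star a * star a))) = star x * (star a * x) :=
        mul_left_cancel₀ ha0 e1
      have k3 : a * (x * (star a * star a)) = star a * x :=
        mul_left_cancel₀ (star_ne_zero.mpr hx) k2
      have k4 : star a * (a * (x * (star a * star a))) = star a * (star a * x) := by rw [k3]
      rw [← mul_assoc, h2, one_mul] at k4
      rw [k4, mul_assoc]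
    obtain ⟨b, hb⟩ : ∃ b, star a * star a = b := ⟨_, rfl⟩
    rw [hb] at comm
    have ci := comm ⟨0, 1, 0, 0⟩
    have cj := comm ⟨0, 0, 1, 0⟩
    have c1 := (Quaternion.imJ_mul _ _).symm.trans ((congrArg QuaternionAlgebra.imJ ci).trans (Quaternion.imJ_mul _ _))
    have c2 := (Quaternion.imK_mul _ _).symm.trans ((congrArg QuaternionAlgebra.imK ci).trans (Quaternion.imK_mul _ _))
    have c3 := (Quaternion.imK_mul _ _).symm.trans ((congrArg QuaternionAlgebra.imK cj).trans (Quaternion.imK_mul _ _))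
    simp [Quaternion.imJ_mul, Quaternion.imK_mul] at c1 c2 c3
    have hI : b.imI = 0 := by linarith
    have hJ : b.imJ = 0 := by linarith
    have hK : b.imK = 0 := by linarith
    have hbre : b = ((b.re : ℝ) : Quaternion ℝ) := by
      ext <;> simp [hI, hJ, hK]
    have hnb : Quaternion.normSq b = 1 := by
      rw [← hb, map_mul, Quaternion.normSq_star, hns, one_mul]
    rw [hbre, Quaternion.normSq_coe] at hnb
    have hre : b.re = 1 ∨ b.re = -1 := sq_eq_one_iff.mp hnb
    have ha2 : a ^ 2 = star b := by
      rw [← hb, star_mul, star_star, sq]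
    rcases hre with h | h
    · left; rw [ha2, hbre, h]; simp
    · right; rw [ha2, hbre, h]; push_cast; simp
  · rintro (h | h) x
    · have haa : a * a = 1 := by rw [← sq]; exact h
      have hsa : star a = a := by
        apply mul_left_cancel₀ ha0; rw [h1, haa]
      rw [hstar x, hsa]
      rw [show a * (star x * (a * (x * a))) * a = a * star x * a * x * (a * a) by noncomm_ring,
        haa, mul_one]
    · have haa : a * a = -1 := by rw [← sq]; exact h
      have hsa : star a = -a := by
        apply mul_left_cancel₀ ha0
        rw [h1, mul_neg, haa, neg_neg]
      rw [hstar x, hsa]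
      rw [show a * (star x * (a * (x * -a))) * -a = a * star x * a * x * (a * a) by noncomm_ring,
        haa]
      noncomm_ring
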